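/- arXiv:2512.21918 — 2 statements merged into one kernel-verified Lean document; each statement's English description precedes it below -/
import Mathlib

section
/- Let L(t,x,ẋ) = L⁰(t,ẋ) + q(t)ᵀx with L⁰ and its ẋ-partial derivative continuous and q continuous. Suppose x̄ : [t₀,t₁] → ℝⁿ is piecewise C¹, satisfies the integral Euler equation L⁰_ẋ(t, x̄'(t)) - ∫_{t₀}^t q(ν) dν = c for a constant vector c, and the Weierstrass excess function satisfies E(L⁰)(t, x̄'(t), x̄'(t) + ξ) ≥ 0 for all ξ ∈ ℝⁿ and all non-corner t. Then for every piecewise C¹ function x with x(t₀) = x̄(t₀) and x(t₁) = x̄(t₁): ∫_{t₀}^{t₁} L(t,x(t),x'(t)) dt ≥ ∫_{t₀}^{t₁} L(t,x̄(t),x̄'(t)) dt. -/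
set_option maxHeartbeats 1000000

open RealInnerProductSpace

/-- Piecewise C¹ on `[a,b]` with the (finite) corner set `S` given explicitly. -/
def PiecewiseC1On {E : Type*} [NormedAddCommGroup E] [NormedSpace ℝ E]
    (a b : ℝ) (S : Finset ℝ) (x dx : ℝ → E) : Prop :=
  ContinuousOn x (Set.Icc a b) ∧
  (∃ M : ℝ, ∀ t ∈ Set.Icc a b, ‖dx t‖ ≤ M) ∧
  (∀ t ∈ Set.Icc a b \ (S : Set ℝ), HasDerivWithinAt x (dx t) (Set.Icc a b) t) ∧
  ContinuousOn dx (Set.Icc a b \ (S : Set ℝ))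

open MeasureTheory Set in
/-- Integrability of `t ↦ G (t, dx t)` for `dx` bounded on `[a,b]` and continuous off a
finite set. -/
lemma key_integrable {a b : ℝ} (hab : a ≤ b) {E : Type*} [NormedAddCommGroup E]
    [NormedSpace ℝ E] [ProperSpace E] (T : Finset ℝ) (dx : ℝ → E) (M : ℝ)
    (hM : ∀ t ∈ Set.Icc a b, ‖dx t‖ ≤ M)
    (hdx : ContinuousOn dx (Set.Icc a b \ (T : Set ℝ)))
    (G : ℝ × E → ℝ) (hG : Continuous G) :
    IntervalIntegrable (fun t => G (t, dx t)) volume a b := by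
  rw [intervalIntegrable_iff_integrableOn_Ioc_of_le hab]
  have hT0 : volume (T : Set ℝ) = 0 := (T.finite_toSet).measure_zero _
  have hrestr : volume.restrict (Set.Ioc a b) =
      volume.restrict (Set.Ioc a b \ (T : Set ℝ)) := by
    refine (Measure.restrict_congr_set ?_).symm
    exact diff_ae_eq_self.2 (measure_mono_null Set.inter_subset_right hT0)
  have hmeas_dx : AEStronglyMeasurable dx (volume.restrict (Set.Ioc a b)) := by
    rw [hrestr]
    exact (hdx.mono (Set.diff_subset_diff_left Set.Ioc_subset_Icc_self)).aestronglyMeasurable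
      (measurableSet_Ioc.diff (T.finite_toSet.measurableSet))
  have hmeas : AEStronglyMeasurable (fun t => G (t, dx t)) (volume.restrict (Set.Ioc a b)) :=
    hG.comp_aestronglyMeasurable (aestronglyMeasurable_id.prodMk hmeas_dx)
  obtain ⟨C, hC⟩ := (isCompact_Icc.prod (isCompact_closedBall (0 : E) M)).exists_bound_of_continuousOn
    hG.continuousOn
  refine ⟨hmeas, HasFiniteIntegral.of_bounded (C := C) ?_⟩
  refine (ae_restrict_iff' measurableSet_Ioc).2 (ae_of_all _ fun t ht => ?_)
  have ht' : t ∈ Set.Icc a b := Set.Ioc_subset_Icc_self ht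
  exact hC (t, dx t) ⟨ht', mem_closedBall_zero_iff.2 (hM t ht')⟩

open MeasureTheory Set intervalIntegral in
/-- FTC-2 with finitely many exceptional points. -/
lemma ftc_finite_exceptions (T : Finset ℝ) : ∀ (a b : ℝ), a ≤ b → ∀ (F g : ℝ → ℝ),
    ContinuousOn F (Set.Icc a b) →
    (∀ t ∈ Set.Ioo a b \ (T : Set ℝ), HasDerivAt F (g t) t) →
    IntervalIntegrable g volume a b →
    ∫ t in a..b, g t = F b - F a := by
  induction T using Finset.strongInduction with
  | _ T ih =>
    intro a b hab F g hF hderiv hint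
    by_cases h : ∃ p ∈ T, p ∈ Set.Ioo a b
    · obtain ⟨p, hpT, hp⟩ := h
      have h1 : IntervalIntegrable g volume a p := by
        refine hint.mono_set ?_
        rw [Set.uIcc_of_le hp.1.le, Set.uIcc_of_le hab]
        exact Set.Icc_subset_Icc le_rfl hp.2.le
      have h2 : IntervalIntegrable g volume p b := by
        refine hint.mono_set ?_
        rw [Set.uIcc_of_le hp.2.le, Set.uIcc_of_le hab]
        exact Set.Icc_subset_Icc hp.1.le le_rfl
      have hsub : T.erase p ⊂ T := Finset.erase_ssubset hpT
      have e1 : ∫ t in a..p, g t = F p - F a := by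
        refine ih _ hsub a p hp.1.le F g (hF.mono (Set.Icc_subset_Icc le_rfl hp.2.le))
          (fun t ht => hderiv t ⟨⟨ht.1.1, ht.1.2.trans hp.2⟩, fun hT => ht.2 ?_⟩) h1
        exact Finset.mem_coe.2 (Finset.mem_erase.2 ⟨ht.1.2.ne, hT⟩)
      have e2 : ∫ t in p..b, g t = F b - F p := by
        refine ih _ hsub p b hp.2.le F g (hF.mono (Set.Icc_subset_Icc hp.1.le le_rfl))
          (fun t ht => hderiv t ⟨⟨hp.1.trans ht.1.1, ht.1.2⟩, fun hT => ht.2 ?_⟩) h2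
        exact Finset.mem_coe.2 (Finset.mem_erase.2 ⟨ht.1.1.ne', hT⟩)
      rw [← intervalIntegral.integral_add_adjacent_intervals h1 h2, e1, e2]; ring
    · push_neg at h
      exact intervalIntegral.integral_eq_sub_of_hasDerivAt_of_le hab hF
        (fun t ht => hderiv t ⟨ht, fun hT => (h t hT) ht⟩) hint

/-- Sufficiency for integrands linear in `x`: if `L(t,x,ẋ) = L⁰(t,ẋ) + ⟪q(t),x⟫`
with the integral Euler equation and the Weierstrass condition
`E(L⁰)(t, x̄', x̄' + ξ) ≥ 0` (all `ξ ∈ ℝⁿ`) along the extremal `x̄`, then `x̄`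
is an absolute minimizer. -/
theorem stmt5 {n : ℕ} (t₀ t₁ : ℝ) (hlt : t₀ < t₁)
    (L0 : ℝ → EuclideanSpace ℝ (Fin n) → ℝ)
    (DL0 : ℝ → EuclideanSpace ℝ (Fin n) → EuclideanSpace ℝ (Fin n))
    (q : ℝ → EuclideanSpace ℝ (Fin n))
    (hL0 : Continuous fun p : ℝ × EuclideanSpace ℝ (Fin n) => L0 p.1 p.2)
    (hDL0 : Continuous fun p : ℝ × EuclideanSpace ℝ (Fin n) => DL0 p.1 p.2)
    (hgrad : ∀ t y, HasGradientAt (L0 t) (DL0 t y) y)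
    (hq : Continuous q)
    (xbar dxbar : ℝ → EuclideanSpace ℝ (Fin n)) (S : Finset ℝ)
    (hxbar : PiecewiseC1On t₀ t₁ S xbar dxbar)
    (c : EuclideanSpace ℝ (Fin n))
    (heuler : ∀ t ∈ Set.Icc t₀ t₁ \ (S : Set ℝ),
      DL0 t (dxbar t) - ∫ ν in t₀..t, q ν = c)
    (hweier : ∀ t ∈ Set.Icc t₀ t₁ \ (S : Set ℝ), ∀ ξ : EuclideanSpace ℝ (Fin n),
      L0 t (dxbar t + ξ) - L0 t (dxbar t) - ⟪DL0 t (dxbar t), ξ⟫ ≥ 0)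
    (x dx : ℝ → EuclideanSpace ℝ (Fin n)) (S' : Finset ℝ)
    (hx : PiecewiseC1On t₀ t₁ S' x dx)
    (hb0 : x t₀ = xbar t₀) (hb1 : x t₁ = xbar t₁) :
    (∫ t in t₀..t₁, (L0 t (dx t) + ⟪q t, x t⟫)) ≥
      ∫ t in t₀..t₁, (L0 t (dxbar t) + ⟪q t, xbar t⟫) := by
  obtain ⟨hxc, ⟨M, hM⟩, hxd, hdxc⟩ := hx
  obtain ⟨hxbc, ⟨M', hM'⟩, hxbd, hdxbc⟩ := hxbar
  have hab : t₀ ≤ t₁ := hlt.le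
  set Q : ℝ → EuclideanSpace ℝ (Fin n) := fun t => ∫ ν in t₀..t, q ν with hQ
  have hQcont : Continuous Q :=
    intervalIntegral.continuous_primitive (fun a b => hq.intervalIntegrable a b) t₀
  have hQderiv : ∀ t : ℝ, HasDerivAt Q (q t) t := fun t =>
    intervalIntegral.integral_hasDerivAt_right (hq.intervalIntegrable _ _)
      (hq.stronglyMeasurableAtFilter _ _) hq.continuousAt
  set f1 : ℝ → ℝ := fun t => L0 t (dx t) + ⟪q t, x t⟫ with hf1
  set f2 : ℝ → ℝ := fun t => L0 t (dxbar t) + ⟪q t, xbar t⟫ with hf2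
  set g : ℝ → ℝ := fun t => ⟪q t, x t - xbar t⟫ + (⟪c + Q t, dx t⟫ - ⟪c + Q t, dxbar t⟫)
    with hg
  set F : ℝ → ℝ := fun t => ⟪c + Q t, x t - xbar t⟫ with hFdef
  -- integrability
  have hGcont : Continuous fun p : ℝ × EuclideanSpace ℝ (Fin n) => (⟪c + Q p.1, p.2⟫ : ℝ) :=
    Continuous.inner (continuous_const.add (hQcont.comp continuous_fst)) continuous_snd
  have hI1 : IntervalIntegrable f1 MeasureTheory.volume t₀ t₁ := by
    refine (key_integrable hab S' dx M hM hdxc (fun p => L0 p.1 p.2) hL0).add ?_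
    apply ContinuousOn.intervalIntegrable
    rw [Set.uIcc_of_le hab]
    exact (hq.continuousOn).inner hxc
  have hI2 : IntervalIntegrable f2 MeasureTheory.volume t₀ t₁ := by
    refine (key_integrable hab S dxbar M' hM' hdxbc (fun p => L0 p.1 p.2) hL0).add ?_
    apply ContinuousOn.intervalIntegrable
    rw [Set.uIcc_of_le hab]
    exact (hq.continuousOn).inner hxbc
  have hIg : IntervalIntegrable g MeasureTheory.volume t₀ t₁ := by
    refine IntervalIntegrable.add ?_ (IntervalIntegrable.sub ?_ ?_)
    · apply ContinuousOn.intervalIntegrable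
      rw [Set.uIcc_of_le hab]
      exact (hq.continuousOn).inner (hxc.sub hxbc)
    · exact key_integrable hab S' dx M hM hdxc
        (fun p : ℝ × EuclideanSpace ℝ (Fin n) => (⟪c + Q p.1, p.2⟫ : ℝ)) hGcont
    · exact key_integrable hab S dxbar M' hM' hdxbc
        (fun p : ℝ × EuclideanSpace ℝ (Fin n) => (⟪c + Q p.1, p.2⟫ : ℝ)) hGcont
  -- FTC : ∫ g = F t₁ - F t₀ = 0
  have hFcont : ContinuousOn F (Set.Icc t₀ t₁) :=
    ((continuous_const.add hQcont).continuousOn).inner (hxc.sub hxbc)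
  have hFderiv : ∀ t ∈ Set.Ioo t₀ t₁ \ ((S ∪ S' : Finset ℝ) : Set ℝ), HasDerivAt F (g t) t := by
    intro t ht
    simp only [Finset.coe_union, Set.mem_diff, Set.mem_union] at ht
    obtain ⟨htIoo, htS⟩ := ht
    have htIcc : t ∈ Set.Icc t₀ t₁ := Set.Ioo_subset_Icc_self htIoo
    have hnhds : Set.Icc t₀ t₁ ∈ nhds t := Icc_mem_nhds htIoo.1 htIoo.2
    have hdx' : HasDerivAt x (dx t) t :=
      (hxd t ⟨htIcc, fun hS => htS (Or.inr hS)⟩).hasDerivAt hnhds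
    have hdxb' : HasDerivAt xbar (dxbar t) t :=
      (hxbd t ⟨htIcc, fun hS => htS (Or.inl hS)⟩).hasDerivAt hnhds
    have hQc : HasDerivAt (fun u => c + Q u) (q t) t := (hQderiv t).const_add c
    have hD : HasDerivAt (fun u => x u - xbar u) (dx t - dxbar t) t := hdx'.sub hdxb'
    have := HasDerivAt.inner ℝ hQc hD
    simpa [hFdef, hg, inner_sub_right, add_comm] using this
  have hgint : ∫ t in t₀..t₁, g t = 0 := by
    have := ftc_finite_exceptions (S ∪ S') t₀ t₁ hab F g hFcont hFderiv hIg
    rw [this, hFdef]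
    simp [hb0, hb1]
  -- pointwise inequality off corners
  have hpt : ∀ t ∈ Set.Icc t₀ t₁ \ ((S ∪ S' : Finset ℝ) : Set ℝ), 0 ≤ f1 t - f2 t - g t := by
    intro t ht
    simp only [Finset.coe_union, Set.mem_diff, Set.mem_union] at ht
    have htS : t ∈ Set.Icc t₀ t₁ \ (S : Set ℝ) := ⟨ht.1, fun h => ht.2 (Or.inl h)⟩
    have hDL : DL0 t (dxbar t) = c + Q t := by
      have h := heuler t htS
      rw [hQ, ← h]; abel
    have hw := hweier t htS (dx t - dxbar t)
    rw [add_sub_cancel] at hw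
    have hid : f1 t - f2 t - g t
        = L0 t (dx t) - L0 t (dxbar t) - ⟪DL0 t (dxbar t), dx t - dxbar t⟫ := by
      simp only [hf1, hf2, hg, ← hDL, inner_sub_right]
      ring
    linarith [hw, hid.ge]
  -- combine
  have hae : 0 ≤ ∫ t in t₀..t₁, (f1 t - f2 t - g t) := by
    refine intervalIntegral.integral_nonneg_of_ae_restrict hab ?_
    have hnull : MeasureTheory.volume (((S ∪ S' : Finset ℝ) : Set ℝ)) = 0 :=
      ((S ∪ S').finite_toSet).measure_zero _
    have h0 : (MeasureTheory.volume.restrict (Set.Icc t₀ t₁)) (((S ∪ S' : Finset ℝ) : Set ℝ)) = 0 :=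
      le_antisymm (le_trans (MeasureTheory.Measure.restrict_le_self _) hnull.le) zero_le
    filter_upwards [MeasureTheory.ae_restrict_mem measurableSet_Icc,
      MeasureTheory.measure_eq_zero_iff_ae_notMem.1 h0] with t ht hnt
    exact hpt t ⟨ht, hnt⟩
  have hsplit : (∫ t in t₀..t₁, f1 t) - (∫ t in t₀..t₁, f2 t)
      = ∫ t in t₀..t₁, (f1 t - f2 t - g t) := by
    calc (∫ t in t₀..t₁, f1 t) - (∫ t in t₀..t₁, f2 t)
        = ∫ t in t₀..t₁, (f1 t - f2 t) := (intervalIntegral.integral_sub hI1 hI2).symm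
      _ = (∫ t in t₀..t₁, (f1 t - f2 t)) - ∫ t in t₀..t₁, g t := by rw [hgint, sub_zero]
      _ = ∫ t in t₀..t₁, (f1 t - f2 t - g t) :=
          (intervalIntegral.integral_sub (hI1.sub hI2) hIg).symm
  rw [ge_iff_le, ← sub_nonneg, hsplit]
  exact hae
end

section
/- Let L(t,x,ẋ) = L⁰(t,ẋ) + L¹(t,x), where L⁰, L¹ and their derivatives L⁰_ẋ, L¹_x, L¹_xx are continuous. Suppose x̄ is a piecewise C¹ admissible extremal (satisfying the integral Euler equation), E(L⁰)(t, x̄'(t), x̄'(t)+ξ) ≥ 0 for all ξ ∈ ℝⁿ and all non-corner t, and ηᵀ L¹_xx(t, x̄(t)+θη) η ≥ 0 for all η ∈ ℝⁿ, θ ∈ (0,1), and non-corner t. Then x̄ is an absolute minimizer: ∫_{t₀}^{t₁} L(t,x(t),x'(t)) dt ≥ ∫_{t₀}^{t₁} L(t,x̄(t),x̄'(t)) dt for all piecewise C¹ x with the same boundary values. -/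
open RealInnerProductSpace MeasureTheory

lemma convex_step {E : Type*} [NormedAddCommGroup E] [InnerProductSpace ℝ E]
    [CompleteSpace E]
    (f : E → ℝ) (g : E → E) (H : E → (E →L[ℝ] E)) (a Δ : E)
    (hg : ∀ v, HasGradientAt f (g v) v)
    (hH : ∀ v, HasFDerivAt g (H v) v)
    (hpos : ∀ θ ∈ Set.Ioo (0:ℝ) 1, (0:ℝ) ≤ ⟪Δ, H (a + θ • Δ) Δ⟫) :
    ⟪g a, Δ⟫ ≤ f (a + Δ) - f a := by
  set c : ℝ → E := fun θ => a + θ • Δ with hc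
  have hcd : ∀ θ : ℝ, HasDerivAt c Δ θ := by
    intro θ
    simpa [hc] using ((hasDerivAt_id θ).smul_const Δ).const_add a
  set k : ℝ → ℝ := fun θ => ⟪g (c θ), Δ⟫ with hk
  have hkd : ∀ θ : ℝ, HasDerivAt k ⟪H (c θ) Δ, Δ⟫ θ := by
    intro θ
    have h1 : HasDerivAt (fun θ => g (c θ)) (H (c θ) Δ) θ :=
      (hH (c θ)).comp_hasDerivAt θ (hcd θ)
    have h2 := (h1.inner ℝ (hasDerivAt_const θ Δ))
    simpa using h2
  have hkmono : MonotoneOn k (Set.Icc (0:ℝ) 1) := by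
    apply monotoneOn_of_deriv_nonneg (convex_Icc 0 1)
      (fun θ _ => ((hkd θ).continuousAt).continuousWithinAt)
      (fun θ _ => ((hkd θ).differentiableAt).differentiableWithinAt)
    intro θ hθ
    rw [interior_Icc] at hθ
    rw [(hkd θ).deriv]
    rw [real_inner_comm]
    exact hpos θ hθ
  set h : ℝ → ℝ := fun θ => f (c θ) - θ * ⟪g a, Δ⟫ with hh
  have hhd : ∀ θ : ℝ, HasDerivAt h (k θ - ⟪g a, Δ⟫) θ := by
    intro θ
    have h1 : HasDerivAt (fun θ => f (c θ)) ⟪g (c θ), Δ⟫ θ := by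
      have := (hg (c θ)).hasFDerivAt.comp_hasDerivAt θ (hcd θ)
      simp at this; exact this
    have := h1.sub ((hasDerivAt_id θ).mul_const (⟪g a, Δ⟫)); simp only [one_mul] at this; exact this
  have hhmono : MonotoneOn h (Set.Icc (0:ℝ) 1) := by
    apply monotoneOn_of_deriv_nonneg (convex_Icc 0 1)
      (fun θ _ => ((hhd θ).continuousAt).continuousWithinAt)
      (fun θ _ => ((hhd θ).differentiableAt).differentiableWithinAt)
    intro θ hθ
    rw [interior_Icc] at hθ
    rw [(hhd θ).deriv, sub_nonneg]
    have : k 0 ≤ k θ := hkmono (by norm_num) ⟨hθ.1.le, hθ.2.le⟩ hθ.1.le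
    simpa [hk, hc] using this
  have := hhmono (Set.left_mem_Icc.2 one_pos.le) (Set.right_mem_Icc.2 one_pos.le) one_pos.le
  simp only [hh, hc, one_smul, zero_smul, add_zero, one_mul, zero_mul, sub_zero, mul_comm] at this
  linarith

/-- Theorem 4.4: for `L(t,x,ẋ) = L⁰(t,ẋ) + L¹(t,x)`, if along the admissible
extremal `x̄` the Weierstrass excess of `L⁰` is nonnegative for all `ξ ∈ ℝⁿ`
and `ηᵀL¹_xx(t, x̄(t)+θη)η ≥ 0` for all `η`, `θ ∈ (0,1)` and non-corner `t`,
then `x̄` is an absolute minimizer. -/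
theorem stmt16 {n : ℕ} (t₀ t₁ : ℝ) (hlt : t₀ < t₁)
    (L0 L1 : ℝ → EuclideanSpace ℝ (Fin n) → ℝ)
    (G0 G1 : ℝ → EuclideanSpace ℝ (Fin n) → EuclideanSpace ℝ (Fin n))
    (H1 : ℝ → EuclideanSpace ℝ (Fin n) →
      (EuclideanSpace ℝ (Fin n) →L[ℝ] EuclideanSpace ℝ (Fin n)))
    (hL0 : Continuous fun p : ℝ × EuclideanSpace ℝ (Fin n) => L0 p.1 p.2)
    (hL1 : Continuous fun p : ℝ × EuclideanSpace ℝ (Fin n) => L1 p.1 p.2)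
    (hG0 : Continuous fun p : ℝ × EuclideanSpace ℝ (Fin n) => G0 p.1 p.2)
    (hG1 : Continuous fun p : ℝ × EuclideanSpace ℝ (Fin n) => G1 p.1 p.2)
    (hH1 : Continuous fun p : ℝ × EuclideanSpace ℝ (Fin n) => H1 p.1 p.2)
    (hgrad0 : ∀ t y, HasGradientAt (L0 t) (G0 t y) y)
    (hgrad1 : ∀ t x, HasGradientAt (L1 t) (G1 t x) x)
    (hhess1 : ∀ t x, HasFDerivAt (G1 t) (H1 t x) x)
    (xbar dxbar : ℝ → EuclideanSpace ℝ (Fin n)) (S : Finset ℝ)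
    (hxbar : PiecewiseC1On t₀ t₁ S xbar dxbar)
    (c : EuclideanSpace ℝ (Fin n))
    (heuler : ∀ t ∈ Set.Icc t₀ t₁ \ (S : Set ℝ),
      G0 t (dxbar t) - ∫ ν in t₀..t, G1 ν (xbar ν) = c)
    (hweier : ∀ t ∈ Set.Icc t₀ t₁ \ (S : Set ℝ), ∀ ξ : EuclideanSpace ℝ (Fin n),
      L0 t (dxbar t + ξ) - L0 t (dxbar t) - ⟪G0 t (dxbar t), ξ⟫ ≥ 0)
    (hlegendre : ∀ t ∈ Set.Icc t₀ t₁ \ (S : Set ℝ), ∀ η : EuclideanSpace ℝ (Fin n),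
      ∀ θ ∈ Set.Ioo (0:ℝ) 1, ⟪η, H1 t (xbar t + θ • η) η⟫ ≥ 0)
    (x dx : ℝ → EuclideanSpace ℝ (Fin n)) (S' : Finset ℝ)
    (hx : PiecewiseC1On t₀ t₁ S' x dx)
    (hb0 : x t₀ = xbar t₀) (hb1 : x t₁ = xbar t₁) :
    (∫ t in t₀..t₁, (L0 t (dx t) + L1 t (x t))) ≥
      ∫ t in t₀..t₁, (L0 t (dxbar t) + L1 t (xbar t)) := by
  classical
  obtain ⟨hxc, ⟨M, hM⟩, hxd, hdxc⟩ := hx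
  obtain ⟨hbc, ⟨Mb, hMb⟩, hbd, hdbc⟩ := hxbar
  set I : Set ℝ := Set.Icc t₀ t₁ with hIdef
  have hIm : MeasurableSet I := measurableSet_Icc
  have hIc : IsCompact I := isCompact_Icc
  -- continuous extensions
  set z : ℝ → EuclideanSpace ℝ (Fin n) := Set.IccExtend hlt.le (I.restrict x) with hzdef
  set y : ℝ → EuclideanSpace ℝ (Fin n) := Set.IccExtend hlt.le (I.restrict xbar) with hydef
  have hzc : Continuous z := (continuousOn_iff_continuous_restrict.1 hxc).Icc_extend'
  have hyc : Continuous y := (continuousOn_iff_continuous_restrict.1 hbc).Icc_extend'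
  have hzx : ∀ t ∈ I, z t = x t := fun t ht => Set.IccExtend_of_mem hlt.le _ ht
  have hyx : ∀ t ∈ I, y t = xbar t := fun t ht => Set.IccExtend_of_mem hlt.le _ ht
  set ψ : ℝ → EuclideanSpace ℝ (Fin n) := fun t => G1 t (y t) with hψdef
  have hψc : Continuous ψ := hG1.comp (continuous_id.prodMk hyc)
  set Φ : ℝ → EuclideanSpace ℝ (Fin n) := fun t => ∫ ν in t₀..t, ψ ν with hΦdef
  have hΦd : ∀ t : ℝ, HasDerivAt Φ (ψ t) t := fun t =>
    (hψc.integral_hasStrictDerivAt t₀ t).hasDerivAt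
  have hΦdiff : Differentiable ℝ Φ := fun t => (hΦd t).differentiableAt
  have hΦc : Continuous Φ := hΦdiff.continuous
  -- Euler equation rewritten
  have heuler' : ∀ t ∈ I \ (S : Set ℝ), G0 t (dxbar t) = c + Φ t := by
    intro t ht
    have h1 := heuler t ht
    have h2 : (∫ ν in t₀..t, G1 ν (xbar ν)) = Φ t := by
      refine (intervalIntegral.integral_congr fun ν hν => ?_).symm
      have hsub : Set.uIcc t₀ t ⊆ I := by
        rw [Set.uIcc_of_le ht.1.1]
        exact Set.Icc_subset_Icc le_rfl ht.1.2
      show G1 ν (y ν) = G1 ν (xbar ν)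
      rw [hyx ν (hsub hν)]
    rw [h2] at h1
    rw [← h1]
    abel
  -- a.e. measurability of derivatives
  have hrestr : ∀ T : Finset ℝ, volume.restrict I = volume.restrict (I \ (T : Set ℝ)) := by
    intro T
    refine Measure.restrict_congr_set ?_
    exact ((MeasureTheory.diff_ae_eq_self (μ := volume) (s := I) (t := (T : Set ℝ))).2
      (measure_mono_null (Set.inter_subset_right (s := I) (t := (T : Set ℝ)))
      ((T.countable_toSet).measure_zero volume))).symm
  have hdxm : AEStronglyMeasurable dx (volume.restrict I) := by
    rw [hrestr S']
    exact hdxc.aestronglyMeasurable (hIm.diff (S'.finite_toSet.measurableSet))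
  have hdbm : AEStronglyMeasurable dxbar (volume.restrict I) := by
    rw [hrestr S]
    exact hdbc.aestronglyMeasurable (hIm.diff (S.finite_toSet.measurableSet))
  -- integrability of the two integrands
  have key_int : ∀ (w dw : ℝ → EuclideanSpace ℝ (Fin n)) (Mw : ℝ),
      AEStronglyMeasurable dw (volume.restrict I) → ContinuousOn w I →
      (∀ t ∈ I, ‖dw t‖ ≤ Mw) →
      IntervalIntegrable (fun t => L0 t (dw t) + L1 t (w t)) volume t₀ t₁ := by
    intro w dw Mw hdwm hwc hMw
    rw [intervalIntegrable_iff_integrableOn_Icc_of_le hlt.le]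
    obtain ⟨C0, hC0⟩ := (hIc.prod (isCompact_closedBall (0 : EuclideanSpace ℝ (Fin n))
      Mw)).exists_bound_of_continuousOn hL0.continuousOn
    obtain ⟨C1, hC1⟩ := (hIc.prod (hIc.image_of_continuousOn hwc)).exists_bound_of_continuousOn
      hL1.continuousOn
    refine ⟨?_, ?_⟩
    · refine AEStronglyMeasurable.add ?_ ?_
      · exact hL0.comp_aestronglyMeasurable (aestronglyMeasurable_id.prodMk hdwm)
      · exact hL1.comp_aestronglyMeasurable
          (aestronglyMeasurable_id.prodMk (hwc.aestronglyMeasurable hIm))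
    · apply MeasureTheory.HasFiniteIntegral.restrict_of_bounded (C := C0 + C1)
        (measure_Icc_lt_top)
      refine (MeasureTheory.ae_restrict_iff' hIm).2 (Filter.Eventually.of_forall fun t ht => ?_)
      have e0 : ‖L0 t (dw t)‖ ≤ C0 :=
        hC0 (t, dw t) ⟨ht, mem_closedBall_zero_iff.2 (hMw t ht)⟩
      have e1 : ‖L1 t (w t)‖ ≤ C1 :=
        hC1 (t, w t) ⟨ht, Set.mem_image_of_mem w ht⟩
      exact (norm_add_le _ _).trans (add_le_add e0 e1)
  have hint_x := key_int x dx M hdxm hxc hM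
  have hint_b := key_int xbar dxbar Mb hdbm hbc hMb
  -- the exact total derivative
  set f' : ℝ → ℝ := fun t => ⟪c + Φ t, dx t - dxbar t⟫ + ⟪ψ t, z t - y t⟫ with hf'def
  set F : ℝ → ℝ := fun t => ⟪c + Φ t, z t - y t⟫ with hFdef
  have hFd : ∀ t ∈ Set.Ioo t₀ t₁ \ ((S ∪ S' : Finset ℝ) : Set ℝ), HasDerivAt F (f' t) t := by
    intro t ht
    obtain ⟨htI, htT⟩ := ht
    have htIcc : t ∈ I := Set.Ioo_subset_Icc_self htI
    have hnhds : I ∈ nhds t := Icc_mem_nhds htI.1 htI.2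
    have htS' : t ∉ (S' : Set ℝ) := fun h => htT (by simp [h])
    have htS : t ∉ (S : Set ℝ) := fun h => htT (by simp [h])
    have hxD : HasDerivAt z (dx t) t := by
      have h1 : HasDerivAt x (dx t) t := (hxd t ⟨htIcc, htS'⟩).hasDerivAt hnhds
      refine h1.congr_of_eventuallyEq ?_
      filter_upwards [hnhds] with s hs using hzx s hs
    have hyD : HasDerivAt y (dxbar t) t := by
      have h1 : HasDerivAt xbar (dxbar t) t := (hbd t ⟨htIcc, htS⟩).hasDerivAt hnhds
      refine h1.congr_of_eventuallyEq ?_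
      filter_upwards [hnhds] with s hs using hyx s hs
    have hud : HasDerivAt (fun τ => c + Φ τ) (ψ t) t := (hΦd t).const_add c
    have := hud.inner ℝ (hxD.sub hyD)
    simpa [hf'def, hFdef] using this
  have hf'int : IntervalIntegrable f' volume t₀ t₁ := by
    rw [intervalIntegrable_iff_integrableOn_Icc_of_le hlt.le]
    obtain ⟨Ca, hCa⟩ := hIc.exists_bound_of_continuousOn
      ((continuous_const.add hΦc).continuousOn (s := I))
    obtain ⟨Cc, hCc⟩ := hIc.exists_bound_of_continuousOn (f := fun t => (⟪ψ t, z t - y t⟫ : ℝ))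
      ((hψc.inner (hzc.sub hyc)).continuousOn)
    refine ⟨?_, ?_⟩
    · refine AEStronglyMeasurable.add ?_ ?_
      · exact MeasureTheory.AEStronglyMeasurable.inner
          (continuous_const.add hΦc).aestronglyMeasurable (hdxm.sub hdbm)
      · exact (hψc.inner (hzc.sub hyc)).aestronglyMeasurable
    · apply MeasureTheory.HasFiniteIntegral.restrict_of_bounded
        (C := Ca * (M + Mb) + Cc) (measure_Icc_lt_top)
      refine (MeasureTheory.ae_restrict_iff' hIm).2 (Filter.Eventually.of_forall fun t ht => ?_)
      have e1 : ‖⟪c + Φ t, dx t - dxbar t⟫‖ ≤ Ca * (M + Mb) := by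
        refine (norm_inner_le_norm _ _).trans ?_
        have h2 : ‖dx t - dxbar t‖ ≤ M + Mb :=
          (norm_sub_le _ _).trans (add_le_add (hM t ht) (hMb t ht))
        exact mul_le_mul (hCa t ht) h2 (norm_nonneg _) ((norm_nonneg _).trans (hCa t ht))
      have e2 : ‖⟪ψ t, z t - y t⟫‖ ≤ Cc := hCc t ht
      exact (norm_add_le _ _).trans (add_le_add e1 e2)
  have hFc : ContinuousOn F I := ((continuous_const.add hΦc).inner (hzc.sub hyc)).continuousOn
  have hFTC : ∫ t in t₀..t₁, f' t = F t₁ - F t₀ :=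
    MeasureTheory.integral_eq_of_hasDerivAt_off_countable_of_le F f' hlt.le
      ((S ∪ S').countable_toSet) hFc hFd hf'int
  have hF0 : F t₁ - F t₀ = 0 := by
    have h1 : z t₁ - y t₁ = 0 := by
      rw [hzx t₁ (Set.right_mem_Icc.2 hlt.le), hyx t₁ (Set.right_mem_Icc.2 hlt.le), hb1, sub_self]
    have h0 : z t₀ - y t₀ = 0 := by
      rw [hzx t₀ (Set.left_mem_Icc.2 hlt.le), hyx t₀ (Set.left_mem_Icc.2 hlt.le), hb0, sub_self]
    simp only [hFdef]
    rw [h1, h0, inner_zero_right, inner_zero_right, sub_zero]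
  -- pointwise inequality a.e.
  have hae : f' ≤ᵐ[volume.restrict I]
      fun t => (L0 t (dx t) + L1 t (x t)) - (L0 t (dxbar t) + L1 t (xbar t)) := by
    have hT0 : (volume.restrict I) ((S ∪ S' : Finset ℝ) : Set ℝ) = 0 :=
      le_antisymm (le_trans (Measure.restrict_apply_le _ _)
        (((S ∪ S').countable_toSet).measure_zero _).le) zero_le
    have hT : ∀ᵐ t ∂(volume.restrict I), t ∉ ((S ∪ S' : Finset ℝ) : Set ℝ) :=
      MeasureTheory.measure_eq_zero_iff_ae_notMem.1 hT0
    filter_upwards [hT, MeasureTheory.ae_restrict_mem hIm] with t htT htI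
    have htS : t ∉ (S : Set ℝ) := fun h => htT (by simp [h])
    have hW := hweier t ⟨htI, htS⟩ (dx t - dxbar t)
    have hadd : dxbar t + (dx t - dxbar t) = dx t := by abel
    rw [hadd] at hW
    have hTy : ⟪G1 t (xbar t), x t - xbar t⟫ ≤ L1 t (x t) - L1 t (xbar t) := by
      have h3 := convex_step (L1 t) (G1 t) (H1 t) (xbar t) (x t - xbar t) (hgrad1 t) (hhess1 t)
        (fun θ hθ => hlegendre t ⟨htI, htS⟩ _ θ hθ)
      have hadd2 : xbar t + (x t - xbar t) = x t := by abel
      rwa [hadd2] at h3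
    have hE : G0 t (dxbar t) = c + Φ t := heuler' t ⟨htI, htS⟩
    have hz : z t = x t := hzx t htI
    have hy : y t = xbar t := hyx t htI
    simp only [hf'def, hψdef, hz, hy, ← hE]
    linarith
  have hmono : (∫ t in t₀..t₁, f' t) ≤
      ∫ t in t₀..t₁, ((L0 t (dx t) + L1 t (x t)) - (L0 t (dxbar t) + L1 t (xbar t))) :=
    intervalIntegral.integral_mono_ae_restrict hlt.le hf'int (hint_x.sub hint_b) hae
  rw [hFTC, hF0, intervalIntegral.integral_sub hint_x hint_b] at hmono
  linarith
end
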